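/- The reduced word 𝐢^D for the longest element of W(D_n) is i-semi-adapted for every i ∈ {1,…,n}. -/

import Mathlib

open scoped Classical

noncomputable section

/-- Standard basis vector `e i` (1-based coordinates, ambient `ℤ^n` sits inside `ℕ → ℤ`). -/
def stdE (i : ℕ) : ℕ → ℤ := fun j => if j = i then 1 else 0

/-- Type `D_n` simple roots: `α_i = e_i - e_(i+1)` for `1 ≤ i ≤ n-1`, `α_n = e_(n-1) + e_n`. -/
def alphaD (n i : ℕ) : ℕ → ℤ := if i = n then stdE (n-1) + stdE n else stdE i - stdE (i+1)

/-- Positive root `β_(i,k) = α_i + ⋯ + α_k = e_i - e_(k+1)` (for `1 ≤ i ≤ k ≤ n-1`). -/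
def betaD (i k : ℕ) : ℕ → ℤ := stdE i - stdE (k+1)

/-- Positive root `γ_(i,k) = α_i + ⋯ + α_(n-2) + α_n + α_(n-1) + ⋯ + α_k = e_i + e_k`
(for `1 ≤ i < k ≤ n`). -/
def gammaD (i k : ℕ) : ℕ → ℤ := stdE i + stdE k

/-- `β` is a positive root of type `D_n`. -/
def PosRootD (n : ℕ) (β : ℕ → ℤ) : Prop :=
  (∃ i k, 1 ≤ i ∧ i ≤ k ∧ k ≤ n-1 ∧ β = betaD i k) ∨
  (∃ i k, 1 ≤ i ∧ i < k ∧ k ≤ n ∧ β = gammaD i k)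

/-- The simple reflection `s_i` of `W(D_n)` acting on `ℤ^n`: for `i ≤ n-1` it swaps
coordinates `i` and `i+1`; `s_n` swaps coordinates `n-1` and `n` and negates both. -/
def sDap (n i : ℕ) (v : ℕ → ℤ) : ℕ → ℤ :=
  if i = n then fun j => if j = n-1 then -(v n) else if j = n then -(v (n-1)) else v j
  else fun j => if j = i then v (i+1) else if j = i+1 then v i else v j

/-- The action of the product `s_(i₁) ⋯ s_(i_N)` on a vector. -/
def actD (n : ℕ) (w : List ℕ) (v : ℕ → ℤ) : ℕ → ℤ := w.foldr (sDap n) v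

/-- The induced root sequence `β_k = s_(i₁)⋯s_(i_(k-1)) (α_(i_k))` of a word (0-indexed). -/
def rootSeqD (n : ℕ) (w : List ℕ) : List (ℕ → ℤ) :=
  (List.range w.length).map fun k => actD n (w.take k) (alphaD n (w.getD k 0))

/-- The block `(i, i+1, …, n-1, n, n-2, n-3, …, i)` of the word `𝐢^D`. -/
def blockD (n i : ℕ) : List ℕ :=
  ((List.range (n-i)).map (· + i)) ++ [n] ++ (((List.range (n-1-i)).map (· + i)).reverse)

/-- The word `𝐢^D`: the blocks `(i, i+1, …, n-1, n, n-2, …, i)` for `i = 1, …, n-2`,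
followed by `(n-1, n)`. -/
def wordD (n : ℕ) : List ℕ :=
  ((List.range (n-2)).flatMap fun i' => blockD n (i'+1)) ++ [n-1, n]

/-- Standard inner product on `ℤ^n` (coordinates `1,…,n`; index `0` unused). -/
def ipD (n : ℕ) (v u : ℕ → ℤ) : ℤ := ∑ j ∈ Finset.range (n+1), v j * u j

/-- Dynkin-diagram adjacency of indices in type `D_n`: `{j,k} = {m, m+1}` for some
`m ≤ n-2`, or `{j,k} = {n-2, n}`. -/
def adjD (n j k : ℕ) : Prop :=
  (∃ m, m ≤ n-2 ∧ ((j = m ∧ k = m+1) ∨ (k = m ∧ j = m+1))) ∨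
  ((j = n-2 ∧ k = n) ∨ (k = n-2 ∧ j = n))

/-- A braid move: `two k` interchanges the letters at positions `k, k+1`;
`three k` replaces the letters `(a, b, a)` at positions `k, k+1, k+2` by `(b, a, b)`. -/
inductive BraidMove where
  | two (k : ℕ)
  | three (k : ℕ)

/-- The effect of a braid move on a word. -/
def moveWord (w : List ℕ) : BraidMove → List ℕ
  | .two k => (w.set k (w.getD (k+1) 0)).set (k+1) (w.getD k 0)
  | .three k => ((w.set k (w.getD (k+1) 0)).set (k+1) (w.getD k 0)).set (k+2) (w.getD (k+1) 0)

/-- Validity of a braid move on a word, in type `D_n`: a 2-term move needs distinct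
non-adjacent letters, a 3-term move needs the pattern `(a, b, a)` with `a, b` adjacent. -/
def moveOKD (n : ℕ) (w : List ℕ) : BraidMove → Prop
  | .two k => k + 1 < w.length ∧ w.getD k 0 ≠ w.getD (k+1) 0 ∧
      ¬ adjD n (w.getD k 0) (w.getD (k+1) 0)
  | .three k => k + 2 < w.length ∧ w.getD (k+2) 0 = w.getD k 0 ∧
      adjD n (w.getD k 0) (w.getD (k+1) 0)

/-- The semi-adaptedness condition for the letter `i`: any 3-term braid move must be applied
where the three consecutive induced roots are `(β, β + α_i, α_i)`. -/
def semiCondD (n i : ℕ) (w : List ℕ) : BraidMove → Prop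
  | .two _ => True
  | .three k =>
      (rootSeqD n w).getD (k+1) 0 = (rootSeqD n w).getD k 0 + alphaD n i ∧
      (rootSeqD n w).getD (k+2) 0 = alphaD n i

/-- Validity of a sequence of braid moves, each allowed by `i`-semi-adaptedness. -/
def validSeqD (n i : ℕ) : List ℕ → List BraidMove → Prop
  | _, [] => True
  | w, m :: σ => moveOKD n w m ∧ semiCondD n i w m ∧ validSeqD n i (moveWord w m) σ

/-- `w` is `i`-semi-adapted: some sequence of braid moves allowed by `i`-semi-adaptedness
takes `w` to a word whose first letter is `i`. -/
def SemiAdaptedD (n i : ℕ) (w : List ℕ) : Prop :=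
  ∃ σ : List BraidMove, validSeqD n i w σ ∧ (σ.foldl moveWord w).getD 0 0 = i

/-! ### Auxiliary development -/

section Aux

lemma sDap_add (n m : ℕ) (u v : ℕ → ℤ) : sDap n m (u + v) = sDap n m u + sDap n m v := by
  unfold sDap
  split_ifs
  all_goals funext j; simp only [Pi.add_apply]; split_ifs <;> ring

lemma actD_nil (n : ℕ) (v : ℕ → ℤ) : actD n [] v = v := rfl

lemma actD_cons (n a : ℕ) (w : List ℕ) (v : ℕ → ℤ) :
    actD n (a :: w) v = sDap n a (actD n w v) := rfl

lemma actD_append (n : ℕ) (u w : List ℕ) (v : ℕ → ℤ) :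
    actD n (u ++ w) v = actD n u (actD n w v) := by
  simp [actD, List.foldr_append]

lemma actD_add (n : ℕ) (w : List ℕ) (u v : ℕ → ℤ) :
    actD n w (u + v) = actD n w u + actD n w v := by
  induction w with
  | nil => rfl
  | cons a w ih => simp only [actD_cons, ih, sDap_add]

/-- ascending segment `[c, c+1, …, c+l-1]` -/
def ascL (c l : ℕ) : List ℕ := (List.range l).map (· + c)

/-- descending segment `[c+l-1, …, c+1, c]` -/
def descL (c l : ℕ) : List ℕ := (ascL c l).reverse

lemma ascL_zero (c : ℕ) : ascL c 0 = [] := rfl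

lemma ascL_succ (c l : ℕ) : ascL c (l + 1) = ascL c l ++ [c + l] := by
  simp [ascL, List.range_succ]; omega

lemma ascL_cons (c l : ℕ) : ascL c (l + 1) = c :: ascL (c + 1) l := by
  unfold ascL
  rw [List.range_succ_eq_map, List.map_cons, List.map_map]
  refine congrArg₂ _ (by omega) ?_
  apply List.map_congr_left
  intro a _
  simp only [Function.comp_apply]
  omega

lemma ascL_append (c l₁ l₂ : ℕ) : ascL c (l₁ + l₂) = ascL c l₁ ++ ascL (c + l₁) l₂ := by
  unfold ascL
  rw [List.range_add, List.map_append, List.map_map]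
  refine congrArg _ ?_
  apply List.map_congr_left
  intro a _
  simp [Function.comp]; omega

lemma descL_zero (c : ℕ) : descL c 0 = [] := rfl

lemma descL_cons (c l : ℕ) : descL c (l + 1) = (c + l) :: descL c l := by
  simp [descL, ascL_succ]

lemma descL_append (c l₁ l₂ : ℕ) : descL c (l₁ + l₂) = descL (c + l₁) l₂ ++ descL c l₁ := by
  simp [descL, ascL_append]

lemma mem_ascL {c l b : ℕ} (h : b ∈ ascL c l) : c ≤ b ∧ b < c + l := by
  simp [ascL] at h; omega

lemma mem_descL {c l b : ℕ} (h : b ∈ descL c l) : c ≤ b ∧ b < c + l := by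
  rw [descL, List.mem_reverse] at h; exact mem_ascL h

lemma blockD_eq (n j : ℕ) : blockD n j = ascL j (n - j) ++ [n] ++ descL j (n - 1 - j) := by
  simp [blockD, ascL, descL]

end Aux
section Pointwise

lemma sDap_app {n m : ℕ} (hm : m ≠ n) (v : ℕ → ℤ) (j : ℕ) :
    sDap n m v j = if j = m then v (m+1) else if j = m+1 then v m else v j := by
  simp only [sDap, if_neg hm]

lemma sDapn_app {n : ℕ} (v : ℕ → ℤ) (j : ℕ) :
    sDap n n v j = if j = n-1 then -(v n) else if j = n then -(v (n-1)) else v j := by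
  simp [sDap]

-- fixing lemmas
lemma pf1 {n m a : ℕ} (hm : m ≠ n) (ha : a ≠ n) (h : m + 1 < a ∨ a + 1 < m) :
    sDap n m (alphaD n a) = alphaD n a := by
  funext j
  simp only [sDap_app hm, alphaD, if_neg ha, Pi.sub_apply, stdE]
  split_ifs <;> omega

lemma pf2 {n a : ℕ} (ha : a ≠ n) (h : a + 1 < n - 1) :
    sDap n n (alphaD n a) = alphaD n a := by
  funext j
  simp only [sDapn_app, alphaD, if_neg ha, Pi.sub_apply, stdE]
  split_ifs <;> omega

lemma pf3 {n m : ℕ} (hm : m ≠ n) (h : m + 1 < n - 1) :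
    sDap n m (alphaD n n) = alphaD n n := by
  funext j
  simp only [sDap_app hm, alphaD, eq_self_iff_true, if_true, Pi.add_apply, stdE]
  split_ifs <;> omega

-- chain lemmas (ascending)
lemma pc1 {n a : ℕ} (h : a + 1 < n) :
    sDap n (a+1) (alphaD n a) = stdE a - stdE (a+2) := by
  funext j
  simp only [sDap_app (show a+1 ≠ n by omega), alphaD, if_neg (show a ≠ n by omega),
    Pi.sub_apply, stdE]
  split_ifs <;> omega

lemma pc2 {n a : ℕ} (h : a + 1 < n) :
    sDap n a (stdE a - stdE (a+2)) = alphaD n (a+1) := by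
  funext j
  simp only [sDap_app (show a ≠ n by omega), alphaD, if_neg (show a+1 ≠ n by omega),
    Pi.sub_apply, stdE]
  split_ifs <;> omega

-- chain lemmas (descending)
lemma pc3 {n a : ℕ} (h2 : 2 ≤ a) (h : a < n) :
    sDap n (a-1) (alphaD n a) = stdE (a-1) - stdE (a+1) := by
  funext j
  simp only [sDap_app (show a-1 ≠ n by omega), alphaD, if_neg (show a ≠ n by omega),
    Pi.sub_apply, stdE]
  split_ifs <;> omega

lemma pc4 {n a : ℕ} (h2 : 2 ≤ a) (h : a < n) :
    sDap n a (stdE (a-1) - stdE (a+1)) = alphaD n (a-1) := by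
  funext j
  simp only [sDap_app (show a ≠ n by omega), alphaD, if_neg (show a-1 ≠ n by omega),
    Pi.sub_apply, stdE]
  split_ifs <;> omega

-- fork computations
lemma pk2 {n : ℕ} (hn : 4 ≤ n) :
    sDap n (n-2) (alphaD n (n-1)) = stdE (n-2) - stdE n := by
  funext j
  simp only [sDap_app (show n-2 ≠ n by omega), alphaD, if_neg (show n-1 ≠ n by omega),
    Pi.sub_apply, stdE]
  split_ifs <;> omega

lemma pk3 {n : ℕ} (hn : 4 ≤ n) :
    sDap n n (stdE (n-2) - stdE n) = stdE (n-2) + stdE (n-1) := by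
  funext j
  simp only [sDapn_app, Pi.sub_apply, Pi.add_apply, stdE]
  split_ifs <;> omega

lemma pk4 {n : ℕ} (hn : 4 ≤ n) :
    sDap n (n-1) (stdE (n-2) + stdE (n-1)) = stdE (n-2) + stdE n := by
  funext j
  simp only [sDap_app (show n-1 ≠ n by omega), Pi.add_apply, stdE]
  split_ifs <;> omega

lemma pk5 {n : ℕ} (hn : 4 ≤ n) :
    sDap n (n-2) (stdE (n-2) + stdE n) = alphaD n n := by
  funext j
  simp only [sDap_app (show n-2 ≠ n by omega), alphaD, eq_self_iff_true, if_true, Pi.add_apply, stdE]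
  split_ifs <;> omega

lemma pk6 {n : ℕ} (hn : 4 ≤ n) :
    sDap n (n-2) (alphaD n n) = stdE (n-2) + stdE n := by
  funext j
  simp only [sDap_app (show n-2 ≠ n by omega), alphaD, eq_self_iff_true, if_true, Pi.add_apply, stdE]
  split_ifs <;> omega

lemma pk7 {n : ℕ} (hn : 4 ≤ n) :
    sDap n n (stdE (n-2) + stdE n) = stdE (n-2) - stdE (n-1) := by
  funext j
  simp only [sDapn_app, Pi.sub_apply, Pi.add_apply, stdE]
  split_ifs <;> omega

lemma pk8 {n : ℕ} (hn : 4 ≤ n) :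
    sDap n (n-1) (stdE (n-2) - stdE (n-1)) = stdE (n-2) - stdE n := by
  funext j
  simp only [sDap_app (show n-1 ≠ n by omega), Pi.sub_apply, stdE]
  split_ifs <;> omega

lemma pk9 {n : ℕ} (hn : 4 ≤ n) :
    sDap n (n-2) (stdE (n-2) - stdE n) = alphaD n (n-1) := by
  funext j
  simp only [sDap_app (show n-2 ≠ n by omega), alphaD, if_neg (show n-1 ≠ n by omega),
    Pi.sub_apply, stdE]
  split_ifs <;> omega

lemma pk10 {n : ℕ} (hn : 4 ≤ n) :
    sDap n n (alphaD n (n-2)) = stdE (n-2) + stdE n := by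
  funext j
  simp only [sDapn_app, alphaD, if_neg (show n-2 ≠ n by omega), Pi.sub_apply, Pi.add_apply, stdE]
  split_ifs <;> omega

-- braid pointwise lemmas, pair (m, m+1)
lemma pb1 {n m : ℕ} (h2 : m + 2 ≤ n) :
    sDap n m (alphaD n (m+1)) = alphaD n (m+1) + alphaD n m := by
  funext j
  simp only [sDap_app (show m ≠ n by omega), alphaD, if_neg (show m ≠ n by omega),
    if_neg (show m+1 ≠ n by omega), Pi.sub_apply, Pi.add_apply, stdE]
  split_ifs <;> omega

lemma pb2 {n m : ℕ} (h2 : m + 2 ≤ n) :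
    sDap n (m+1) (alphaD n m) = alphaD n m + alphaD n (m+1) := by
  funext j
  simp only [sDap_app (show m+1 ≠ n by omega), alphaD, if_neg (show m ≠ n by omega),
    if_neg (show m+1 ≠ n by omega), Pi.sub_apply, Pi.add_apply, stdE]
  split_ifs <;> omega

lemma pb3 {n m : ℕ} (h2 : m + 2 ≤ n) :
    sDap n m (sDap n (m+1) (alphaD n m)) = alphaD n (m+1) := by
  funext j
  simp only [sDap_app (show m ≠ n by omega), sDap_app (show m+1 ≠ n by omega), alphaD,
    if_neg (show m ≠ n by omega), if_neg (show m+1 ≠ n by omega), Pi.sub_apply, stdE]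
  split_ifs <;> omega

lemma pb4 {n m : ℕ} (h2 : m + 2 ≤ n) :
    sDap n (m+1) (sDap n m (alphaD n (m+1))) = alphaD n m := by
  funext j
  simp only [sDap_app (show m ≠ n by omega), sDap_app (show m+1 ≠ n by omega), alphaD,
    if_neg (show m ≠ n by omega), if_neg (show m+1 ≠ n by omega), Pi.sub_apply, stdE]
  split_ifs <;> omega

-- braid pointwise lemmas, fork pair (n-2, n)
lemma pb5 {n : ℕ} (hn : 4 ≤ n) :
    sDap n n (alphaD n (n-2)) = alphaD n (n-2) + alphaD n n := by
  rw [pk10 hn]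
  funext j
  simp only [alphaD, eq_self_iff_true, if_true, if_neg (show n-2 ≠ n by omega), Pi.sub_apply, Pi.add_apply, stdE]
  split_ifs <;> omega

lemma pb6 {n : ℕ} (hn : 4 ≤ n) :
    sDap n (n-2) (alphaD n n) = alphaD n n + alphaD n (n-2) := by
  rw [pk6 hn]
  funext j
  simp only [alphaD, eq_self_iff_true, if_true, if_neg (show n-2 ≠ n by omega), Pi.sub_apply, Pi.add_apply, stdE]
  split_ifs <;> omega

lemma pb7 {n : ℕ} (hn : 4 ≤ n) :
    sDap n n (sDap n (n-2) (alphaD n n)) = alphaD n (n-2) := by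
  rw [pk6 hn, pk7 hn]
  funext j
  simp only [alphaD, if_neg (show n-2 ≠ n by omega), Pi.sub_apply, stdE]
  split_ifs <;> omega

lemma pb8 {n : ℕ} (hn : 4 ≤ n) :
    sDap n (n-2) (sDap n n (alphaD n (n-2))) = alphaD n n := by
  rw [pk10 hn, pk5 hn]

end Pointwise
section Actions

lemma actD_fix {n : ℕ} {w : List ℕ} {v : ℕ → ℤ} (h : ∀ m ∈ w, sDap n m v = v) :
    actD n w v = v := by
  induction w with
  | nil => rfl
  | cons a w ih =>
      rw [actD_cons, ih (fun m hm => h m (List.mem_cons_of_mem _ hm)),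
        h a List.mem_cons_self]

lemma ch_asc {n j a k : ℕ} (hja : j ≤ a) (hak : a + 1 ≤ k) (hk : k ≤ n - 1) (hn : 4 ≤ n) :
    actD n (ascL j (k + 1 - j)) (alphaD n a) = alphaD n (a + 1) := by
  have h1 : k + 1 - j = (a - j) + ((k - a - 1) + 1 + 1) := by omega
  rw [h1, ascL_append, ascL_cons, ascL_cons]
  have h2 : j + (a - j) = a := by omega
  rw [h2, actD_append, actD_cons, actD_cons]
  rw [actD_fix (w := ascL (a + 1 + 1) (k - a - 1)) (v := alphaD n a) ?hfix]
  case hfix =>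
    intro m hm
    have hb := mem_ascL hm
    exact pf1 (by omega) (by omega) (by omega)
  rw [pc1 (by omega), pc2 (by omega)]
  refine actD_fix ?_
  intro m hm
  have hb := mem_ascL hm
  exact pf1 (by omega) (by omega) (by omega)

lemma ch_desc {n j a k : ℕ} (h2 : 2 ≤ a) (hja : j ≤ a - 1) (hak : a ≤ k) (hk : k ≤ n - 2)
    (hn : 4 ≤ n) :
    actD n (descL j (k + 1 - j)) (alphaD n a) = alphaD n (a - 1) := by
  have h1 : k + 1 - j = ((a - 1 - j) + 1 + 1) + (k - a) := by omega
  rw [h1, descL_append, descL_cons, descL_cons]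
  have h2a : j + (a - 1 - j) = a - 1 := by omega
  have h2b : j + (a - 1 - j + 1) = a := by omega
  rw [h2a, h2b, actD_append, actD_cons, actD_cons]
  rw [actD_fix (w := descL j (a - 1 - j)) (v := alphaD n a) ?hfix]
  case hfix =>
    intro m hm
    have hb := mem_descL hm
    exact pf1 (by omega) (by omega) (by omega)
  rw [pc3 h2 (by omega), pc4 h2 (by omega)]
  refine actD_fix ?_
  intro m hm
  have hb := mem_descL hm
  exact pf1 (by omega) (by omega) (by omega)

lemma actB_fix {n j i : ℕ} (hn : 4 ≤ n) (hj1 : 1 ≤ j) (hji : j < i) (hi : i ≤ n - 2) :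
    actD n (blockD n j) (alphaD n i) = alphaD n i := by
  rw [blockD_eq, actD_append, actD_append]
  have hd : n - 1 - j = (n - 2) + 1 - j := by omega
  rw [hd, ch_desc (a := i) (k := n - 2) (by omega) (by omega) (by omega) (by omega) hn]
  show actD n (ascL j (n - j)) (sDap n n (alphaD n (i - 1))) = alphaD n i
  rw [pf2 (by omega) (by omega)]
  have ha : n - j = (n - 1) + 1 - j := by omega
  rw [ha, ch_asc (a := i - 1) (k := n - 1) (by omega) (by omega) (by omega) hn,
    show i - 1 + 1 = i by omega]

lemma actB_swap1 {n j : ℕ} (hn : 4 ≤ n) (hj1 : 1 ≤ j) (hj : j ≤ n - 2) :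
    actD n (blockD n j) (alphaD n (n - 1)) = alphaD n n := by
  have t1 : actD n (descL j (n - 1 - j)) (alphaD n (n - 1)) = stdE (n-2) - stdE n := by
    rw [show n - 1 - j = (n - 2 - j) + 1 by omega, descL_cons,
      show j + (n - 2 - j) = n - 2 by omega, actD_cons,
      actD_fix (w := descL j (n - 2 - j)) (v := alphaD n (n - 1)) ?hfix, pk2 hn]
    case hfix =>
      intro m hm
      have hb := mem_descL hm
      exact pf1 (by omega) (by omega) (by omega)
  have t2 : ascL (n - 2) 2 = [n - 2, n - 1] := by
    rw [ascL_cons, ascL_cons, ascL_zero, show n - 2 + 1 = n - 1 by omega]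
  have t3 : actD n (ascL j (n - j)) (stdE (n-2) + stdE (n-1)) = alphaD n n := by
    rw [show n - j = (n - 2 - j) + 2 by omega, ascL_append,
      show j + (n - 2 - j) = n - 2 by omega, t2, actD_append]
    show actD n (ascL j (n - 2 - j)) (sDap n (n-2) (sDap n (n-1) (stdE (n-2) + stdE (n-1)))) = _
    rw [pk4 hn, pk5 hn]
    refine actD_fix ?_
    intro m hm
    have hb := mem_ascL hm
    exact pf3 (by omega) (by omega)
  rw [blockD_eq, actD_append, actD_append, t1]
  show actD n (ascL j (n - j)) (sDap n n (stdE (n-2) - stdE n)) = alphaD n n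
  rw [pk3 hn, t3]

lemma actB_swap2 {n j : ℕ} (hn : 4 ≤ n) (hj1 : 1 ≤ j) (hj : j ≤ n - 2) :
    actD n (blockD n j) (alphaD n n) = alphaD n (n - 1) := by
  have t1 : actD n (descL j (n - 1 - j)) (alphaD n n) = stdE (n-2) + stdE n := by
    rw [show n - 1 - j = (n - 2 - j) + 1 by omega, descL_cons,
      show j + (n - 2 - j) = n - 2 by omega, actD_cons,
      actD_fix (w := descL j (n - 2 - j)) (v := alphaD n n) ?hfix, pk6 hn]
    case hfix =>
      intro m hm
      have hb := mem_descL hm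
      exact pf3 (by omega) (by omega)
  have t2 : ascL (n - 2) 2 = [n - 2, n - 1] := by
    rw [ascL_cons, ascL_cons, ascL_zero, show n - 2 + 1 = n - 1 by omega]
  have t3 : actD n (ascL j (n - j)) (stdE (n-2) - stdE (n-1)) = alphaD n (n - 1) := by
    rw [show n - j = (n - 2 - j) + 2 by omega, ascL_append,
      show j + (n - 2 - j) = n - 2 by omega, t2, actD_append]
    show actD n (ascL j (n - 2 - j)) (sDap n (n-2) (sDap n (n-1) (stdE (n-2) - stdE (n-1)))) = _
    rw [pk8 hn, pk9 hn]
    refine actD_fix ?_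
    intro m hm
    have hb := mem_ascL hm
    exact pf1 (by omega) (by omega) (by omega)
  rw [blockD_eq, actD_append, actD_append, t1]
  show actD n (ascL j (n - j)) (sDap n n (stdE (n-2) + stdE n)) = alphaD n (n - 1)
  rw [pk7 hn, t3]

/-- prefix of the word: blocks `1, …, j`. -/
def PreD (n j : ℕ) : List ℕ := (List.range j).flatMap fun t => blockD n (t+1)

lemma PreD_zero (n : ℕ) : PreD n 0 = [] := rfl

lemma PreD_succ (n j : ℕ) : PreD n (j+1) = PreD n j ++ blockD n (j+1) := by
  simp [PreD, List.range_succ]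

lemma wordD_eq (n : ℕ) : wordD n = PreD n (n-2) ++ [n-1, n] := rfl

lemma M1 {n i : ℕ} (hn : 4 ≤ n) (hi : i ≤ n - 2) :
    ∀ j, j < i → actD n (PreD n j) (alphaD n i) = alphaD n i := by
  intro j
  induction j with
  | zero => intro _; rfl
  | succ j ih =>
      intro hj
      rw [PreD_succ, actD_append, actB_fix hn (by omega) (by omega) hi, ih (by omega)]

/-- the traveling letter at stage `j` for `i ∈ {n-1, n}` -/
def togD (n i j : ℕ) : ℕ := if j % 2 = 0 then i else if i = n then n - 1 else n

lemma M2 {n i : ℕ} (hn : 4 ≤ n) (hi : i = n - 1 ∨ i = n) :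
    ∀ j, j ≤ n - 2 → actD n (PreD n j) (alphaD n (togD n i j)) = alphaD n i := by
  intro j
  induction j with
  | zero => intro _; rfl
  | succ j ih =>
      intro hj
      have hne : ¬ (n - 1 = n) := by omega
      rw [PreD_succ, actD_append]
      have hih := ih (by omega)
      rcases Nat.even_or_odd j with he | ho
      · have h0 : j % 2 = 0 := Nat.even_iff.mp he
        have h1 : ¬ ((j+1) % 2 = 0) := by omega
        have ht0 : togD n i j = i := by unfold togD; rw [if_pos h0]
        rw [ht0] at hih
        rcases hi with hi | hi
        · have ht : togD n i (j+1) = n := by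
            unfold togD; rw [if_neg h1, if_neg (by omega)]
          rw [ht, actB_swap2 hn (by omega) (by omega), hi]
          rw [hi] at hih
          exact hih
        · have ht : togD n i (j+1) = n - 1 := by
            unfold togD; rw [if_neg h1, if_pos hi]
          rw [ht, actB_swap1 hn (by omega) (by omega), hi]
          rw [hi] at hih
          exact hih
      · have h0 : ¬ (j % 2 = 0) := by
          have := Nat.odd_iff.mp ho; omega
        have h1 : (j+1) % 2 = 0 := by
          have := Nat.odd_iff.mp ho; omega
        have ht : togD n i (j+1) = i := by unfold togD; rw [if_pos h1]
        rw [ht]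
        rcases hi with hi | hi
        · have ht0 : togD n i j = n := by
            unfold togD; rw [if_neg h0, if_neg (by omega)]
          rw [ht0] at hih
          rw [hi, actB_swap1 hn (by omega) (by omega)]
          rw [hi] at hih
          exact hih
        · have ht0 : togD n i j = n - 1 := by
            unfold togD; rw [if_neg h0, if_pos hi]
          rw [ht0] at hih
          rw [hi, actB_swap2 hn (by omega) (by omega)]
          rw [hi] at hih
          exact hih

end Actions
section Reach

lemma getD_app (u : List ℕ) : ∀ (l : List ℕ) (k : ℕ), (u ++ l).getD (u.length + k) 0 = l.getD k 0 := by
  induction u with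
  | nil => intro l k; simp
  | cons a u ih =>
      intro l k
      show (a :: (u ++ l)).getD (u.length + 1 + k) 0 = l.getD k 0
      rw [show u.length + 1 + k = (u.length + k) + 1 by omega]
      rw [List.getD_cons_succ]
      exact ih l k

lemma set_app (u : List ℕ) : ∀ (l : List ℕ) (k x : ℕ), (u ++ l).set (u.length + k) x = u ++ l.set k x := by
  induction u with
  | nil => intro l k x; simp
  | cons a u ih =>
      intro l k x
      show (a :: (u ++ l)).set (u.length + 1 + k) x = a :: (u ++ l.set k x)
      rw [show u.length + 1 + k = (u.length + k) + 1 by omega]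
      rw [List.set_cons_succ]
      rw [ih l k x]

lemma take_app (u : List ℕ) : ∀ (l : List ℕ) (k : ℕ), (u ++ l).take (u.length + k) = u ++ l.take k := by
  induction u with
  | nil => intro l k; simp
  | cons a u ih =>
      intro l k
      show (a :: (u ++ l)).take (u.length + 1 + k) = a :: (u ++ l.take k)
      rw [show u.length + 1 + k = (u.length + k) + 1 by omega]
      rw [List.take_succ_cons]
      rw [ih l k]

lemma getD_app0 (u l : List ℕ) (a : ℕ) : (u ++ a :: l).getD u.length 0 = a := by
  simpa using getD_app u (a :: l) 0

lemma getD_app1 (u l : List ℕ) (a b : ℕ) : (u ++ a :: b :: l).getD (u.length + 1) 0 = b := by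
  simpa using getD_app u (a :: b :: l) 1

lemma getD_app2 (u l : List ℕ) (a b c : ℕ) :
    (u ++ a :: b :: c :: l).getD (u.length + 2) 0 = c := by
  simpa using getD_app u (a :: b :: c :: l) 2

lemma set_app0 (u l : List ℕ) (a x : ℕ) : (u ++ a :: l).set u.length x = u ++ x :: l := by
  simpa using set_app u (a :: l) 0 x

lemma set_app1 (u l : List ℕ) (a b x : ℕ) :
    (u ++ a :: b :: l).set (u.length + 1) x = u ++ a :: x :: l := by
  simpa using set_app u (a :: b :: l) 1 x

lemma set_app2 (u l : List ℕ) (a b c x : ℕ) :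
    (u ++ a :: b :: c :: l).set (u.length + 2) x = u ++ a :: b :: x :: l := by
  simpa using set_app u (a :: b :: c :: l) 2 x

lemma take_app0 (u l : List ℕ) : (u ++ l).take u.length = u := by
  simpa using take_app u l 0

lemma take_app1 (u l : List ℕ) (a : ℕ) : (u ++ a :: l).take (u.length + 1) = u ++ [a] := by
  simpa using take_app u (a :: l) 1

lemma take_app2 (u l : List ℕ) (a b : ℕ) :
    (u ++ a :: b :: l).take (u.length + 2) = u ++ [a, b] := by
  simpa using take_app u (a :: b :: l) 2

lemma rsD (n : ℕ) (w : List ℕ) (k : ℕ) (h : k < w.length) :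
    (rootSeqD n w).getD k 0 = actD n (w.take k) (alphaD n (w.getD k 0)) := by
  unfold rootSeqD
  rw [List.getD_eq_getElem _ _ (by simpa using h)]
  simp

lemma moveWord_two (u r : List ℕ) (b c : ℕ) :
    moveWord (u ++ b :: c :: r) (.two u.length) = u ++ c :: b :: r := by
  show ((u ++ b :: c :: r).set u.length ((u ++ b :: c :: r).getD (u.length+1) 0)).set
    (u.length+1) ((u ++ b :: c :: r).getD u.length 0) = u ++ c :: b :: r
  rw [getD_app1, getD_app0, set_app0, set_app1]

lemma moveWord_three (u r : List ℕ) (b c : ℕ) :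
    moveWord (u ++ c :: b :: c :: r) (.three u.length) = u ++ b :: c :: b :: r := by
  show (((u ++ c :: b :: c :: r).set u.length ((u ++ c :: b :: c :: r).getD (u.length+1) 0)).set
    (u.length+1) ((u ++ c :: b :: c :: r).getD u.length 0)).set
    (u.length+2) ((u ++ c :: b :: c :: r).getD (u.length+1) 0) = u ++ b :: c :: b :: r
  rw [getD_app1, getD_app0, set_app0, set_app1, set_app2]

lemma reach_done (n i : ℕ) (r : List ℕ) : SemiAdaptedD n i (i :: r) :=
  ⟨[], trivial, rfl⟩

lemma reach_two {n i : ℕ} {u r : List ℕ} {b c : ℕ} (hbc : b ≠ c) (hna : ¬ adjD n b c)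
    (h : SemiAdaptedD n i (u ++ c :: b :: r)) : SemiAdaptedD n i (u ++ b :: c :: r) := by
  obtain ⟨σ, hval, hfin⟩ := h
  refine ⟨.two u.length :: σ, ⟨?_, trivial, ?_⟩, ?_⟩
  · show u.length + 1 < (u ++ b :: c :: r).length ∧ _ ∧ _
    rw [getD_app0, getD_app1]
    refine ⟨by simp, hbc, hna⟩
  · rw [moveWord_two]
    exact hval
  · rw [List.foldl_cons, moveWord_two]
    exact hfin

lemma reach_three {n i : ℕ} {u r : List ℕ} {b c : ℕ} (hadj : adjD n c b)
    (hJ : actD n u (alphaD n b) = alphaD n i)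
    (h1 : sDap n c (alphaD n b) = alphaD n b + alphaD n c)
    (h2 : sDap n c (sDap n b (alphaD n c)) = alphaD n b)
    (h : SemiAdaptedD n i (u ++ b :: c :: b :: r)) :
    SemiAdaptedD n i (u ++ c :: b :: c :: r) := by
  obtain ⟨σ, hval, hfin⟩ := h
  have hlen : u.length + 2 < (u ++ c :: b :: c :: r).length := by simp
  refine ⟨.three u.length :: σ, ⟨?_, ?_, ?_⟩, ?_⟩
  · show u.length + 2 < (u ++ c :: b :: c :: r).length ∧ _ ∧ _
    rw [getD_app0, getD_app1, getD_app2]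
    exact ⟨hlen, rfl, hadj⟩
  · show (rootSeqD n _).getD (u.length+1) 0 = (rootSeqD n _).getD u.length 0 + alphaD n i ∧
      (rootSeqD n _).getD (u.length+2) 0 = alphaD n i
    rw [rsD n _ _ (by simp), rsD n _ _ (by simp), rsD n _ _ (by simp [hlen])]
    rw [getD_app0, getD_app1, getD_app2, take_app0, take_app1, take_app2]
    constructor
    · rw [actD_append]
      show actD n u (sDap n c (alphaD n b)) = actD n u (alphaD n c) + alphaD n i
      rw [h1, actD_add, hJ, add_comm]
    · rw [actD_append]
      show actD n u (sDap n c (sDap n b (alphaD n c))) = alphaD n i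
      rw [h2, hJ]
  · rw [moveWord_three]
    exact hval
  · rw [List.foldl_cons, moveWord_three]
    exact hfin

lemma reach_run {n i c : ℕ} : ∀ (v u r : List ℕ), (∀ b ∈ v, b ≠ c ∧ ¬ adjD n b c) →
    SemiAdaptedD n i (u ++ c :: (v ++ r)) → SemiAdaptedD n i (u ++ v ++ c :: r) := by
  intro v
  induction v with
  | nil =>
      intro u r _ h
      simpa using h
  | cons b v ih =>
      intro u r hv h
      have e1 : u ++ (b :: v) ++ c :: r = (u ++ [b]) ++ v ++ c :: r := by simp
      rw [e1]
      apply ih (u ++ [b]) r (fun m hm => hv m (List.mem_cons_of_mem _ hm))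
      have e2 : (u ++ [b]) ++ c :: (v ++ r) = u ++ b :: c :: (v ++ r) := by simp
      rw [e2]
      have hb := hv b List.mem_cons_self
      apply reach_two hb.1 hb.2
      simpa using h

end Reach
section AdjBraid

lemma not_adjD {n b c : ℕ}
    (H : ¬ ((b ≤ n-2 ∧ c = b+1) ∨ (c ≤ n-2 ∧ b = c+1) ∨ (b = n-2 ∧ c = n) ∨ (c = n-2 ∧ b = n))) :
    ¬ adjD n b c := by
  intro h
  rcases h with ⟨m, hm, h | h⟩ | h | h <;> exact H (by omega)

lemma adjD_succ {n m : ℕ} (h2 : m ≤ n - 2) : adjD n m (m+1) :=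
  Or.inl ⟨m, h2, Or.inl ⟨rfl, rfl⟩⟩

lemma adjD_succ' {n m : ℕ} (h2 : m ≤ n - 2) : adjD n (m+1) m :=
  Or.inl ⟨m, h2, Or.inr ⟨rfl, rfl⟩⟩

lemma adjD_pred {n a : ℕ} (h1 : 1 ≤ a) (h2 : a - 1 ≤ n - 2) : adjD n a (a-1) := by
  have := adjD_succ' (n := n) (m := a - 1) h2
  rwa [show a - 1 + 1 = a by omega] at this

lemma adjD_pred' {n a : ℕ} (h1 : 1 ≤ a) (h2 : a - 1 ≤ n - 2) : adjD n (a-1) a := by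
  have := adjD_succ (n := n) (m := a - 1) h2
  rwa [show a - 1 + 1 = a by omega] at this

lemma adjD_fork {n : ℕ} : adjD n (n-2) n := Or.inr (Or.inl ⟨rfl, rfl⟩)

lemma adjD_fork' {n : ℕ} : adjD n n (n-2) := Or.inr (Or.inr ⟨rfl, rfl⟩)

/-- braid data for the pair `(c, b) = (a, a-1)` -/
lemma br_up1 {n a : ℕ} (h2 : 2 ≤ a) (h : a + 1 ≤ n) :
    sDap n a (alphaD n (a-1)) = alphaD n (a-1) + alphaD n a := by
  have := pb2 (n := n) (m := a-1) (by omega)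
  rwa [show a - 1 + 1 = a by omega] at this

lemma br_up2 {n a : ℕ} (h2 : 2 ≤ a) (h : a + 1 ≤ n) :
    sDap n a (sDap n (a-1) (alphaD n a)) = alphaD n (a-1) := by
  have := pb4 (n := n) (m := a-1) (by omega)
  rwa [show a - 1 + 1 = a by omega] at this

/-- braid data for the pair `(c, b) = (a-1, a)` -/
lemma br_down1 {n a : ℕ} (h2 : 2 ≤ a) (h : a + 1 ≤ n) :
    sDap n (a-1) (alphaD n a) = alphaD n a + alphaD n (a-1) := by
  have := pb1 (n := n) (m := a-1) (by omega)
  rwa [show a - 1 + 1 = a by omega] at this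

lemma br_down2 {n a : ℕ} (h2 : 2 ≤ a) (h : a + 1 ≤ n) :
    sDap n (a-1) (sDap n a (alphaD n (a-1))) = alphaD n a := by
  have := pb3 (n := n) (m := a-1) (by omega)
  rwa [show a - 1 + 1 = a by omega] at this

end AdjBraid
section ReachPrimed

lemma reach_two' {n i b c : ℕ} (u r w : List ℕ) (hw : w = u ++ b :: c :: r)
    (hbc : b ≠ c) (hna : ¬ adjD n b c)
    (h : SemiAdaptedD n i (u ++ c :: b :: r)) : SemiAdaptedD n i w := by
  rw [hw]; exact reach_two hbc hna h

lemma reach_three' {n i b c : ℕ} (u r w : List ℕ) (hw : w = u ++ c :: b :: c :: r)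
    (hadj : adjD n c b)
    (hJ : actD n u (alphaD n b) = alphaD n i)
    (h1 : sDap n c (alphaD n b) = alphaD n b + alphaD n c)
    (h2 : sDap n c (sDap n b (alphaD n c)) = alphaD n b)
    (h : SemiAdaptedD n i (u ++ b :: c :: b :: r)) : SemiAdaptedD n i w := by
  rw [hw]; exact reach_three hadj hJ h1 h2 h

lemma reach_run' {n i c : ℕ} (v u r w : List ℕ) (hw : w = u ++ v ++ c :: r)
    (hcond : ∀ b ∈ v, b ≠ c ∧ ¬ adjD n b c)
    (h : SemiAdaptedD n i (u ++ c :: (v ++ r))) : SemiAdaptedD n i w := by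
  rw [hw]; exact reach_run v u r hcond h

end ReachPrimed
section PhaseA

lemma phaseA {n i j : ℕ} (hn : 4 ≤ n) (hji : j + 1 < i) (hi : i ≤ n - 2)
    (prev : ∀ r', SemiAdaptedD n i (PreD n j ++ i :: r')) (r : List ℕ) :
    SemiAdaptedD n i (PreD n j ++ blockD n (j+1) ++ i :: r) := by
  set P := PreD n j with hP
  set A := ascL (j+1) (i-1-(j+1)) with hA
  set T := ascL (i+1) (n-1-i) with hT
  set Dt := descL (i+1) (n-2-i) with hDt
  set Db := descL (j+1) (i-1-(j+1)) with hDb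
  -- decompositions
  have hdesc : descL (j+1) (n-1-(j+1)) = Dt ++ i :: (i-1) :: Db := by
    rw [hDt, hDb, show n-1-(j+1) = ((i-1-(j+1)) + 1 + 1) + (n-2-i) by omega, descL_append,
      descL_cons, descL_cons, show (j+1) + ((i-1-(j+1)) + 1 + 1) = i + 1 by omega,
      show (j+1) + ((i-1-(j+1)) + 1) = i by omega, show (j+1) + (i-1-(j+1)) = i - 1 by omega]
  have hasc : ascL (j+1) (n-(j+1)) = A ++ (i-1) :: i :: T := by
    rw [hA, hT, show n-(j+1) = (i-1-(j+1)) + ((n-1-i) + 1 + 1) by omega, ascL_append,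
      show (j+1) + (i-1-(j+1)) = i - 1 by omega, ascL_cons, show i - 1 + 1 = i by omega,
      ascL_cons]
  have hblk : blockD n (j+1) = (A ++ (i-1) :: i :: T) ++ [n] ++ (Dt ++ i :: (i-1) :: Db) := by
    rw [blockD_eq, hdesc, hasc]
  -- membership conditions
  have hcondBot : ∀ b ∈ Db, b ≠ i ∧ ¬ adjD n b i := by
    intro b hb
    have := mem_descL hb
    exact ⟨by omega, not_adjD (by omega)⟩
  have hcondBot' : ∀ b ∈ A, b ≠ i ∧ ¬ adjD n b i := by
    intro b hb
    have := mem_ascL hb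
    exact ⟨by omega, not_adjD (by omega)⟩
  have hcondV : ∀ b ∈ T ++ [n] ++ Dt, b ≠ i - 1 ∧ ¬ adjD n b (i-1) := by
    intro b hb
    have hbb : i + 1 ≤ b ∧ b ≤ n := by
      rcases List.mem_append.mp hb with hb | hb
      · rcases List.mem_append.mp hb with hb | hb
        · have := mem_ascL hb; omega
        · simp at hb; omega
      · have := mem_descL hb; omega
    exact ⟨by omega, not_adjD (by omega)⟩
  -- fixing facts
  have hfixA : ∀ v, (∀ m ∈ A, sDap n m v = v) → actD n A v = v := fun v h => actD_fix h
  have hM : actD n P (alphaD n i) = alphaD n i := M1 hn hi j (by omega)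
  -- J-invariants
  have hAfix : actD n A (alphaD n i) = alphaD n i := by
    refine actD_fix ?_
    intro m hm
    have := mem_ascL hm
    rw [hA] at hm
    have := mem_ascL hm
    exact pf1 (by omega) (by omega) (by omega)
  have hJ2 : actD n (P ++ (A ++ ((i-1) :: i :: (T ++ ([n] ++ Dt)))))
      (alphaD n (i-1)) = alphaD n i := by
    rw [actD_append, actD_append, actD_cons, actD_cons, actD_append, actD_append]
    rw [actD_fix (w := Dt) (v := alphaD n (i-1)) ?hfix1]
    case hfix1 =>
      intro m hm
      rw [hDt] at hm
      have := mem_descL hm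
      exact pf1 (by omega) (by omega) (by omega)
    show actD n P (actD n A (sDap n (i-1) (sDap n i (actD n T
      (sDap n n (alphaD n (i-1))))))) = alphaD n i
    rw [pf2 (by omega) (by omega)]
    rw [actD_fix (w := T) (v := alphaD n (i-1)) ?hfix2]
    case hfix2 =>
      intro m hm
      rw [hT] at hm
      have := mem_ascL hm
      exact pf1 (by omega) (by omega) (by omega)
    have hs1 := pc1 (n := n) (a := i - 1) (by omega)
    rw [show i - 1 + 1 = i by omega, show i - 1 + 2 = i + 1 by omega] at hs1
    have hs2 := pc2 (n := n) (a := i - 1) (by omega)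
    rw [show i - 1 + 1 = i by omega, show i - 1 + 2 = i + 1 by omega] at hs2
    rw [hs1, hs2, hAfix, hM]
  have hJ4 : actD n (P ++ A) (alphaD n i) = alphaD n i := by
    rw [actD_append, hAfix, hM]
  -- the journey
  rw [hblk]
  apply reach_run' Db (P ++ (A ++ ((i-1) :: i :: (T ++ ([n] ++ (Dt ++ (i :: (i-1) :: []))))))) r _
    (by simp) hcondBot
  apply reach_three' (P ++ (A ++ ((i-1) :: i :: (T ++ ([n] ++ Dt))))) (Db ++ r) _ (by simp)
    (adjD_pred (by omega) (by omega)) hJ2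
    (br_up1 (by omega) (by omega)) (br_up2 (by omega) (by omega))
  apply reach_run' (T ++ [n] ++ Dt) (P ++ (A ++ ((i-1) :: i :: [])))
    (i :: (i-1) :: (Db ++ r)) _ (by simp) hcondV
  apply reach_three' (P ++ A) ((T ++ [n] ++ Dt) ++ (i :: (i-1) :: (Db ++ r))) _ (by simp)
    (adjD_pred' (by omega) (by omega)) hJ4
    (br_down1 (by omega) (by omega)) (br_down2 (by omega) (by omega))
  apply reach_run' A P ((i-1) :: i :: ((T ++ [n] ++ Dt) ++ (i :: (i-1) :: (Db ++ r)))) _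
    (by simp) hcondBot'
  exact prev _

end PhaseA
section PhaseNM

lemma phaseN {n i j : ℕ} (hn : 4 ≤ n) (hj : j + 1 ≤ n - 2)
    (hM : actD n (PreD n j) (alphaD n (n-1)) = alphaD n i)
    (prev : ∀ r', SemiAdaptedD n i (PreD n j ++ (n-1) :: r')) (r : List ℕ) :
    SemiAdaptedD n i (PreD n j ++ blockD n (j+1) ++ n :: r) := by
  set P := PreD n j with hP
  set A := ascL (j+1) (n-2-(j+1)) with hA
  set Db := descL (j+1) (n-2-(j+1)) with hDb
  have hasc : ascL (j+1) (n-(j+1)) = A ++ (n-2) :: (n-1) :: [] := by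
    rw [hA, show n-(j+1) = (n-2-(j+1)) + (1 + 1) by omega, ascL_append,
      show (j+1) + (n-2-(j+1)) = n - 2 by omega, ascL_cons, show n - 2 + 1 = n - 1 by omega,
      ascL_cons, ascL_zero]
  have hdesc : descL (j+1) (n-1-(j+1)) = (n-2) :: Db := by
    rw [hDb, show n-1-(j+1) = (n-2-(j+1)) + 1 by omega, descL_cons,
      show (j+1) + (n-2-(j+1)) = n - 2 by omega]
  have hblk : blockD n (j+1) = (A ++ (n-2) :: (n-1) :: []) ++ [n] ++ ((n-2) :: Db) := by
    rw [blockD_eq, hdesc, hasc]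
  have hmemA : ∀ b ∈ A, j + 1 ≤ b ∧ b ≤ n - 3 := by
    intro b hb; rw [hA] at hb; have := mem_ascL hb; omega
  have hmemD : ∀ b ∈ Db, j + 1 ≤ b ∧ b ≤ n - 3 := by
    intro b hb; rw [hDb] at hb; have := mem_descL hb; omega
  have hAfix1 : actD n A (alphaD n (n-1)) = alphaD n (n-1) := by
    refine actD_fix ?_
    intro m hm
    have := hmemA m hm
    exact pf1 (by omega) (by omega) (by omega)
  have hJ2 : actD n (P ++ (A ++ ((n-2) :: (n-1) :: []))) (alphaD n (n-2)) = alphaD n i := by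
    rw [actD_append, actD_append, actD_cons, actD_cons, actD_nil]
    have hs1 := pc1 (n := n) (a := n - 2) (by omega)
    rw [show n - 2 + 1 = n - 1 by omega, show n - 2 + 2 = n by omega] at hs1
    have hs2 := pc2 (n := n) (a := n - 2) (by omega)
    rw [show n - 2 + 1 = n - 1 by omega, show n - 2 + 2 = n by omega] at hs2
    rw [hs1, hs2, hAfix1, hM]
  have hJ3 : actD n (P ++ A) (alphaD n (n-1)) = alphaD n i := by
    rw [actD_append, hAfix1, hM]
  have hadj2 : adjD n (n-2) (n-1) := by
    have := adjD_succ (n := n) (m := n-2) (le_refl _)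
    rwa [show n - 2 + 1 = n - 1 by omega] at this
  have hbr1 := br_down1 (n := n) (a := n-1) (by omega) (by omega)
  have hbr2 := br_down2 (n := n) (a := n-1) (by omega) (by omega)
  rw [show n - 1 - 1 = n - 2 by omega] at hbr1 hbr2
  rw [hblk]
  apply reach_run' (c := n) Db (P ++ (A ++ ((n-2) :: (n-1) :: ([n] ++ ((n-2) :: []))))) r _
    (by simp) ?condD
  case condD =>
    intro b hb
    have := hmemD b hb
    exact ⟨by omega, not_adjD (by omega)⟩
  apply reach_three' (c := n) (b := n-2) (P ++ (A ++ ((n-2) :: (n-1) :: []))) (Db ++ r) _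
    (by simp) adjD_fork' hJ2 (pb5 hn) (pb7 hn)
  apply reach_three' (c := n-2) (b := n-1) (P ++ A) (n :: (n-2) :: (Db ++ r)) _ (by simp)
    hadj2 hJ3 hbr1 hbr2
  apply reach_run' (c := n-1) A P ((n-2) :: (n-1) :: (n :: (n-2) :: (Db ++ r))) _ (by simp) ?condA
  case condA =>
    intro b hb
    have := hmemA b hb
    exact ⟨by omega, not_adjD (by omega)⟩
  exact prev _

lemma phaseM {n i j : ℕ} (hn : 4 ≤ n) (hj : j + 1 ≤ n - 2)
    (hM : actD n (PreD n j) (alphaD n n) = alphaD n i)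
    (prev : ∀ r', SemiAdaptedD n i (PreD n j ++ n :: r')) (r : List ℕ) :
    SemiAdaptedD n i (PreD n j ++ blockD n (j+1) ++ (n-1) :: r) := by
  set P := PreD n j with hP
  set A := ascL (j+1) (n-2-(j+1)) with hA
  set Db := descL (j+1) (n-2-(j+1)) with hDb
  have hasc : ascL (j+1) (n-(j+1)) = A ++ (n-2) :: (n-1) :: [] := by
    rw [hA, show n-(j+1) = (n-2-(j+1)) + (1 + 1) by omega, ascL_append,
      show (j+1) + (n-2-(j+1)) = n - 2 by omega, ascL_cons, show n - 2 + 1 = n - 1 by omega,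
      ascL_cons, ascL_zero]
  have hdesc : descL (j+1) (n-1-(j+1)) = (n-2) :: Db := by
    rw [hDb, show n-1-(j+1) = (n-2-(j+1)) + 1 by omega, descL_cons,
      show (j+1) + (n-2-(j+1)) = n - 2 by omega]
  have hblk : blockD n (j+1) = (A ++ (n-2) :: (n-1) :: []) ++ [n] ++ ((n-2) :: Db) := by
    rw [blockD_eq, hdesc, hasc]
  have hmemA : ∀ b ∈ A, j + 1 ≤ b ∧ b ≤ n - 3 := by
    intro b hb; rw [hA] at hb; have := mem_ascL hb; omega
  have hmemD : ∀ b ∈ Db, j + 1 ≤ b ∧ b ≤ n - 3 := by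
    intro b hb; rw [hDb] at hb; have := mem_descL hb; omega
  have hAfixn : actD n A (alphaD n n) = alphaD n n := by
    refine actD_fix ?_
    intro m hm
    have := hmemA m hm
    exact pf3 (by omega) (by omega)
  have hJ2 : actD n (P ++ (A ++ ((n-2) :: n :: []))) (alphaD n (n-2)) = alphaD n i := by
    rw [actD_append, actD_append, actD_cons, actD_cons, actD_nil]
    show actD n P (actD n A (sDap n (n-2) (sDap n n (alphaD n (n-2))))) = alphaD n i
    rw [pk10 hn, pk5 hn, hAfixn, hM]
  have hJ3 : actD n (P ++ A) (alphaD n n) = alphaD n i := by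
    rw [actD_append, hAfixn, hM]
  have hadj2 : adjD n (n-1) (n-2) := by
    have := adjD_succ' (n := n) (m := n-2) (le_refl _)
    rwa [show n - 2 + 1 = n - 1 by omega] at this
  have hbr1 := br_up1 (n := n) (a := n-1) (by omega) (by omega)
  have hbr2 := br_up2 (n := n) (a := n-1) (by omega) (by omega)
  rw [show n - 1 - 1 = n - 2 by omega] at hbr1 hbr2
  rw [hblk]
  apply reach_run' (c := n-1) Db (P ++ (A ++ ((n-2) :: (n-1) :: ([n] ++ ((n-2) :: []))))) r _
    (by simp) ?condD
  case condD =>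
    intro b hb
    have := hmemD b hb
    exact ⟨by omega, not_adjD (by omega)⟩
  apply reach_two' (b := n-1) (c := n) (P ++ (A ++ ((n-2) :: []))) ((n-2) :: (n-1) :: (Db ++ r))
    _ (by simp) (show n - 1 ≠ n by omega) (not_adjD (by omega))
  apply reach_three' (c := n-1) (b := n-2) (P ++ (A ++ ((n-2) :: n :: []))) (Db ++ r) _ (by simp)
    hadj2 hJ2 hbr1 hbr2
  apply reach_three' (c := n-2) (b := n) (P ++ A) ((n-1) :: (n-2) :: (Db ++ r)) _ (by simp)
    adjD_fork hJ3 (pb6 hn) (pb8 hn)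
  apply reach_run' (c := n) A P ((n-2) :: n :: ((n-1) :: (n-2) :: (Db ++ r))) _ (by simp) ?condA
  case condA =>
    intro b hb
    have := hmemA b hb
    exact ⟨by omega, not_adjD (by omega)⟩
  exact prev _

end PhaseNM
section Assembly

lemma word_split {n : ℕ} (hn : 4 ≤ n) : ∀ d k, k + d = n - 2 → ∃ t, wordD n = PreD n k ++ t := by
  intro d
  induction d with
  | zero =>
      intro k hk
      have : k = n - 2 := by omega
      subst this
      exact ⟨[n-1, n], wordD_eq n⟩
  | succ d ih =>
      intro k hk
      obtain ⟨t, ht⟩ := ih (k+1) (by omega)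
      refine ⟨blockD n (k+1) ++ t, ?_⟩
      rw [ht, PreD_succ, List.append_assoc]

end Assembly

/-- The reduced word `𝐢^D` for the longest element of `W(D_n)` is
`i`-semi-adapted for every `i ∈ {1,…,n}`. -/
theorem statement15 (n : ℕ) (hn : 4 ≤ n) (i : ℕ) (hi1 : 1 ≤ i) (hi2 : i ≤ n) :
    SemiAdaptedD n i (wordD n) := by
  by_cases hile : i ≤ n - 2
  · -- small letters: the traveling letter is `i` throughout
    have claim : ∀ j, j < i → ∀ rr, SemiAdaptedD n i (PreD n j ++ i :: rr) := by
      intro j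
      induction j with
      | zero =>
          intro _ rr
          rw [PreD_zero, List.nil_append]
          exact reach_done n i rr
      | succ j ih =>
          intro hj rr
          rw [PreD_succ]
          exact phaseA hn hj hile (fun r' => ih (by omega) r') rr
    obtain ⟨t, ht⟩ := word_split hn (n - 2 - i) i (by omega)
    have hpre : PreD n i = PreD n (i-1) ++ blockD n i := by
      have := PreD_succ n (i-1)
      rwa [show i - 1 + 1 = i by omega] at this
    have hb : blockD n i = i :: (ascL (i+1) (n-i-1) ++ [n] ++ descL i (n-1-i)) := by
      rw [blockD_eq, show n - i = (n-i-1)+1 by omega, ascL_cons]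
      simp
    rw [ht, hpre, hb, List.append_assoc, List.cons_append]
    exact claim (i-1) (by omega) _
  · -- large letters: the traveling letter alternates between `n-1` and `n`
    have hi' : i = n - 1 ∨ i = n := by omega
    have claimB : ∀ j, j ≤ n - 2 → ∀ rr, SemiAdaptedD n i (PreD n j ++ togD n i j :: rr) := by
      intro j
      induction j with
      | zero =>
          intro _ rr
          have h0 : togD n i 0 = i := by unfold togD; simp
          rw [PreD_zero, List.nil_append, h0]
          exact reach_done n i rr
      | succ j ih =>
          intro hj rr
          rw [PreD_succ]
          have hM2 := M2 hn hi' j (by omega)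
          rcases Nat.even_or_odd j with he | ho
          · have h0 : j % 2 = 0 := Nat.even_iff.mp he
            have h1 : ¬ ((j+1) % 2 = 0) := by omega
            have ht0 : togD n i j = i := by unfold togD; rw [if_pos h0]
            rw [ht0] at hM2
            rcases hi' with hi' | hi'
            · have htj : togD n i (j+1) = n := by
                unfold togD; rw [if_neg h1, if_neg (show ¬ i = n by omega)]
              rw [htj]
              refine phaseN hn (by omega) ?_ ?_ rr
              · rw [← hi']; exact hM2
              · intro r'
                have hthis := ih (by omega) r'
                rwa [ht0.trans hi'] at hthis
            · have htj : togD n i (j+1) = n - 1 := by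
                unfold togD; rw [if_neg h1, if_pos hi']
              rw [htj]
              refine phaseM hn (by omega) ?_ ?_ rr
              · conv at hM2 => lhs; rw [hi']
                exact hM2
              · intro r'
                have hthis := ih (by omega) r'
                rwa [ht0.trans hi'] at hthis
          · have h0 : ¬ (j % 2 = 0) := by
              have := Nat.odd_iff.mp ho; omega
            have h1 : (j+1) % 2 = 0 := by
              have := Nat.odd_iff.mp ho; omega
            have htj : togD n i (j+1) = i := by unfold togD; rw [if_pos h1]
            rw [htj]
            rcases hi' with hi' | hi'
            · have ht0 : togD n i j = n := by
                unfold togD; rw [if_neg h0, if_neg (show ¬ i = n by omega)]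
              rw [ht0] at hM2
              rw [hi'] at hM2 ⊢
              refine phaseM hn (by omega) hM2 ?_ rr
              intro r'
              have hthis := ih (by omega) r'
              rw [ht0, hi'] at hthis
              exact hthis
            · have ht0 : togD n i j = n - 1 := by
                unfold togD; rw [if_neg h0, if_pos hi']
              rw [ht0] at hM2
              rw [hi'] at hM2 ⊢
              refine phaseN hn (by omega) hM2 ?_ rr
              intro r'
              have hthis := ih (by omega) r'
              rw [ht0, hi'] at hthis
              exact hthis
    have hc : togD n i (n-2) = n - 1 ∨ togD n i (n-2) = n := by
      unfold togD; split_ifs <;> omega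
    rcases hc with hc | hc
    · rw [wordD_eq]
      have := claimB (n-2) (le_refl _) [n]
      rwa [hc] at this
    · rw [wordD_eq]
      apply reach_two' (b := n-1) (c := n) (PreD n (n-2)) [] _ (by simp)
        (show n - 1 ≠ n by omega) (not_adjD (by omega))
      have := claimB (n-2) (le_refl _) [n-1]
      rwa [hc] at this
end
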